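/- If f : ℝ^p → ℝ is σ-strongly convex and differentiable with L-Lipschitz gradient, then for all x, y, ⟨x - y, ∇f(x) - ∇f(y)⟩ ≥ (1/(σ+L)) ‖∇f(x) - ∇f(y)‖² + (σL/(σ+L)) ‖x - y‖². -/

import Mathlib

local notation "⟪" x ", " y "⟫" => @inner ℝ _ _ x y

section Aux

variable {E : Type*} [NormedAddCommGroup E] [InnerProductSpace ℝ E] [CompleteSpace E]

lemma line_hasDerivAt (f : E → ℝ) (f' : E → E) (hgrad : ∀ x, HasGradientAt f (f' x) x)
    (x d : E) (t : ℝ) :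
    HasDerivAt (fun s : ℝ => f (x + s • d)) ⟪f' (x + t • d), d⟫ t := by
  have h1 : HasDerivAt (fun s : ℝ => x + s • d) d t := by
    simpa using ((hasDerivAt_id t).smul_const d).const_add x
  have h2 := (hgrad (x + t • d)).hasFDerivAt.comp_hasDerivAt t h1
  simpa [InnerProductSpace.toDual_apply_apply, Function.comp_def] using h2

lemma mono_aux (φ φ' : ℝ → ℝ) (hφ : ∀ t, HasDerivAt φ (φ' t) t)
    (h : ∀ t ∈ Set.Ioo (0:ℝ) 1, 0 ≤ φ' t) : φ 0 ≤ φ 1 := by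
  have hmono : MonotoneOn φ (Set.Icc 0 1) := by
    apply monotoneOn_of_deriv_nonneg (convex_Icc 0 1)
    · exact fun t _ => (hφ t).continuousAt.continuousWithinAt
    · intro t ht
      exact ((hφ t).differentiableAt).differentiableWithinAt
    · intro t ht
      rw [interior_Icc] at ht
      rw [(hφ t).deriv]
      exact h t ht
  exact hmono (by simp) (by simp) (by norm_num)

lemma bregman_lower (f : E → ℝ) (f' : E → E) (hgrad : ∀ x, HasGradientAt f (f' x) x)
    (σ : ℝ) (hsc : ∀ x y, ⟪f' x - f' y, x - y⟫ ≥ σ * ‖x - y‖ ^ 2) (x y : E) :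
    f x + ⟪f' x, y - x⟫ + σ / 2 * ‖y - x‖ ^ 2 ≤ f y := by
  set d := y - x with hd
  set φ : ℝ → ℝ := fun t => f (x + t • d) - t * ⟪f' x, d⟫ - σ / 2 * t ^ 2 * ‖d‖ ^ 2 with hφdef
  have key : φ 0 ≤ φ 1 := by
    apply mono_aux φ (fun t => ⟪f' (x + t • d), d⟫ - ⟪f' x, d⟫ - σ * t * ‖d‖ ^ 2)
    · intro t
      have h1 := line_hasDerivAt f f' hgrad x d t
      have h2 : HasDerivAt (fun t : ℝ => t * ⟪f' x, d⟫) ⟪f' x, d⟫ t := by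
        simpa using (hasDerivAt_id t).mul_const (⟪f' x, d⟫)
      have h3 : HasDerivAt (fun t : ℝ => σ / 2 * t ^ 2 * ‖d‖ ^ 2) (σ * t * ‖d‖ ^ 2) t := by
        have := ((hasDerivAt_pow 2 t).const_mul (σ / 2)).mul_const (‖d‖ ^ 2)
        exact this.congr_deriv (by ring)
      exact (h1.sub h2).sub h3
    · intro t ht
      have h0 := hsc (x + t • d) x
      have he : x + t • d - x = t • d := by abel
      rw [he] at h0
      rw [real_inner_smul_right, norm_smul] at h0
      have ht0 : 0 < t := ht.1
      have h1 : ⟪f' (x + t • d) - f' x, d⟫ ≥ σ * t * ‖d‖ ^ 2 := by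
        rw [Real.norm_eq_abs, abs_of_pos ht0] at h0
        nlinarith [h0]
      rw [inner_sub_left] at h1
      linarith
  have hxd : x + d = y := by rw [hd]; abel
  simp only [hφdef] at key
  norm_num at key
  rw [hxd] at key
  linarith [key]

lemma bregman_upper (f : E → ℝ) (f' : E → E) (hgrad : ∀ x, HasGradientAt f (f' x) x)
    (L : ℝ) (hlip : ∀ x y, ‖f' x - f' y‖ ≤ L * ‖x - y‖) (x y : E) :
    f y ≤ f x + ⟪f' x, y - x⟫ + L / 2 * ‖y - x‖ ^ 2 := by
  set d := y - x with hd
  set φ : ℝ → ℝ := fun t => t * ⟪f' x, d⟫ + L / 2 * t ^ 2 * ‖d‖ ^ 2 - f (x + t • d) with hφdef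
  have key : φ 0 ≤ φ 1 := by
    apply mono_aux φ (fun t => ⟪f' x, d⟫ + L * t * ‖d‖ ^ 2 - ⟪f' (x + t • d), d⟫)
    · intro t
      have h1 := line_hasDerivAt f f' hgrad x d t
      have h2 : HasDerivAt (fun t : ℝ => t * ⟪f' x, d⟫) ⟪f' x, d⟫ t := by
        simpa using (hasDerivAt_id t).mul_const (⟪f' x, d⟫)
      have h3 : HasDerivAt (fun t : ℝ => L / 2 * t ^ 2 * ‖d‖ ^ 2) (L * t * ‖d‖ ^ 2) t := by
        have := ((hasDerivAt_pow 2 t).const_mul (L / 2)).mul_const (‖d‖ ^ 2)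
        exact this.congr_deriv (by ring)
      exact (h2.add h3).sub h1
    · intro t ht
      have ht0 : 0 < t := ht.1
      have h0 := hlip (x + t • d) x
      have he : x + t • d - x = t • d := by abel
      rw [he, norm_smul, Real.norm_eq_abs, abs_of_pos ht0] at h0
      have hcs : ⟪f' (x + t • d) - f' x, d⟫ ≤ ‖f' (x + t • d) - f' x‖ * ‖d‖ :=
        real_inner_le_norm _ _
      have h1 : ⟪f' (x + t • d) - f' x, d⟫ ≤ L * t * ‖d‖ ^ 2 := by
        nlinarith [norm_nonneg d]
      rw [inner_sub_left] at h1
      linarith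
  have hxd : x + d = y := by rw [hd]; abel
  simp only [hφdef] at key
  norm_num at key
  rw [hxd] at key
  linarith [key]

lemma coco (h : E → ℝ) (h' : E → E) (Λ : ℝ) (hΛ : 0 < Λ)
    (A : ∀ x y, h x + ⟪h' x, y - x⟫ ≤ h y)
    (B : ∀ x y, h y ≤ h x + ⟪h' x, y - x⟫ + Λ / 2 * ‖y - x‖ ^ 2) :
    ∀ x y, ⟪h' x - h' y, x - y⟫ ≥ (1 / Λ) * ‖h' x - h' y‖ ^ 2 := by
  have key : ∀ x y, h x + ⟪h' x, y - x⟫ + 1 / (2 * Λ) * ‖h' y - h' x‖ ^ 2 ≤ h y := by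
    intro x y
    set g := h' y - h' x with hg
    set z := y - (1 / Λ) • g with hz
    have hA := A x z
    have hB := B y z
    have e1 : z - y = -((1 / Λ) • g) := by rw [hz]; abel
    have e2 : z - x = (y - x) + (z - y) := by abel
    have e3 : ⟪h' x, z - x⟫ = ⟪h' x, y - x⟫ + ⟪h' x, z - y⟫ := by
      rw [e2, inner_add_right]
    have e4 : ⟪h' y, z - y⟫ = ⟪h' x, z - y⟫ - (1 / Λ) * ‖g‖ ^ 2 := by
      have h1 : ⟪h' y, z - y⟫ - ⟪h' x, z - y⟫ = ⟪g, z - y⟫ := by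
        rw [hg, inner_sub_left]
      have h2 : ⟪g, z - y⟫ = -(1 / Λ * ‖g‖ ^ 2) := by
        rw [e1, inner_neg_right, real_inner_smul_right, real_inner_self_eq_norm_sq]
      linarith
    have e5 : ‖z - y‖ ^ 2 = (1 / Λ) ^ 2 * ‖g‖ ^ 2 := by
      rw [e1, norm_neg, norm_smul, mul_pow, Real.norm_eq_abs, sq_abs]
    rw [e3] at hA
    rw [e4, e5] at hB
    have hΛ' : Λ ≠ 0 := ne_of_gt hΛ
    have : Λ / 2 * ((1 / Λ) ^ 2 * ‖g‖ ^ 2) = 1 / (2 * Λ) * ‖g‖ ^ 2 := by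
      field_simp
    rw [this] at hB
    have : (1 / Λ) * ‖g‖ ^ 2 - 1 / (2 * Λ) * ‖g‖ ^ 2 = 1 / (2 * Λ) * ‖g‖ ^ 2 := by
      field_simp; ring
    linarith
  intro x y
  have k1 := key x y
  have k2 := key y x
  have hn : ‖h' y - h' x‖ = ‖h' x - h' y‖ := by rw [← norm_neg]; congr 1; abel
  rw [hn] at k1
  have hi : ⟪h' x - h' y, x - y⟫ = (-⟪h' x, y - x⟫) - ⟪h' y, x - y⟫ := by
    rw [inner_sub_left, show x - y = -(y - x) by abel, inner_neg_right, inner_neg_right]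
  rw [ge_iff_le, hi]
  have e : 1 / Λ * ‖h' x - h' y‖ ^ 2
      = (1 / (2 * Λ)) * ‖h' x - h' y‖ ^ 2 + (1 / (2 * Λ)) * ‖h' x - h' y‖ ^ 2 := by
    field_simp; ring
  rw [e]
  linarith

end Aux

theorem stmt1 {p : ℕ} (f : EuclideanSpace ℝ (Fin p) → ℝ)
    (f' : EuclideanSpace ℝ (Fin p) → EuclideanSpace ℝ (Fin p))
    (hgrad : ∀ x, HasGradientAt f (f' x) x)
    (σ L : ℝ) (hσ : 0 < σ) (hL : 0 < L)
    (hsc : ∀ x y, ⟪f' x - f' y, x - y⟫ ≥ σ * ‖x - y‖ ^ 2)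
    (hlip : ∀ x y, ‖f' x - f' y‖ ≤ L * ‖x - y‖) :
    ∀ x y, ⟪x - y, f' x - f' y⟫ ≥
      (1 / (σ + L)) * ‖f' x - f' y‖ ^ 2 + (σ * L / (σ + L)) * ‖x - y‖ ^ 2 := by
  intro x y
  by_cases hxy : x = y
  · subst hxy; simp
  · -- σ ≤ L
    have hd0 : (0:ℝ) < ‖x - y‖ := by
      rw [norm_pos_iff]; exact sub_ne_zero_of_ne hxy
    have hσL : σ ≤ L := by
      have h1 := hsc x y
      have h2 : ⟪f' x - f' y, x - y⟫ ≤ ‖f' x - f' y‖ * ‖x - y‖ := real_inner_le_norm _ _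
      have h3 := hlip x y
      nlinarith [mul_le_mul_of_nonneg_right h3 hd0.le, mul_pos hd0 hd0]
    -- cocoercivity of f itself
    have hcoco_f : ∀ u v, ⟪f' u - f' v, u - v⟫ ≥ (1 / L) * ‖f' u - f' v‖ ^ 2 := by
      apply coco f f' L hL
      · intro u v
        have := bregman_lower f f' hgrad σ hsc u v
        nlinarith [sq_nonneg (‖v - u‖), hσ.le]
      · exact fun u v => bregman_upper f f' hgrad L hlip u v
    set a := ⟪f' x - f' y, x - y⟫ with ha
    set n := ‖f' x - f' y‖ with hn
    set m := ‖x - y‖ with hm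
    have hsym : ⟪x - y, f' x - f' y⟫ = a := real_inner_comm _ _
    rw [hsym]
    rcases eq_or_lt_of_le hσL with heq | hlt
    · -- σ = L
      have h1 : a ≥ σ * m ^ 2 := hsc x y
      have h2 := hcoco_f x y
      subst heq
      rw [ge_iff_le, ← sub_nonneg]
      have e : a - (1 / (σ + σ) * n ^ 2 + σ * σ / (σ + σ) * m ^ 2)
          = ((a - (1 / σ) * n ^ 2) + (a - σ * m ^ 2)) / 2 := by
        field_simp; ring
      rw [e]
      have h2' : a ≥ (1 / σ) * n ^ 2 := h2
      linarith
    · -- σ < L : apply coco to h = f - σ/2 ‖·‖²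
      set h : EuclideanSpace ℝ (Fin p) → ℝ := fun z => f z - σ / 2 * ‖z‖ ^ 2 with hh
      set h' : EuclideanSpace ℝ (Fin p) → EuclideanSpace ℝ (Fin p) := fun z => f' z - σ • z with hh'
      have hid : ∀ u v : EuclideanSpace ℝ (Fin p),
          ‖v - u‖ ^ 2 = ‖v‖ ^ 2 - ‖u‖ ^ 2 - 2 * ⟪u, v - u⟫ := by
        intro u v
        have := norm_sub_sq_real v u
        rw [inner_sub_right, real_inner_comm v u, real_inner_self_eq_norm_sq] at *
        nlinarith [this]
      have hA : ∀ u v, h u + ⟪h' u, v - u⟫ ≤ h v := by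
        intro u v
        have hlow := bregman_lower f f' hgrad σ hsc u v
        have hexp : ⟪h' u, v - u⟫ = ⟪f' u, v - u⟫ - σ * ⟪u, v - u⟫ := by
          rw [hh']
          simp only [inner_sub_left, real_inner_smul_left]
        rw [hh]
        simp only [hexp]
        have := hid u v
        nlinarith [hlow]
      have hB : ∀ u v, h v ≤ h u + ⟪h' u, v - u⟫ + (L - σ) / 2 * ‖v - u‖ ^ 2 := by
        intro u v
        have hup := bregman_upper f f' hgrad L hlip u v
        have hexp : ⟪h' u, v - u⟫ = ⟪f' u, v - u⟫ - σ * ⟪u, v - u⟫ := by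
          rw [hh']
          simp only [inner_sub_left, real_inner_smul_left]
        rw [hh]
        simp only [hexp]
        have := hid u v
        nlinarith [hup]
      have hcoco_h := coco h h' (L - σ) (by linarith) hA hB x y
      have hexp1 : h' x - h' y = (f' x - f' y) - σ • (x - y) := by
        rw [hh']
        simp only [smul_sub]
        abel
      have hexp2 : ⟪h' x - h' y, x - y⟫ = a - σ * m ^ 2 := by
        rw [hexp1, inner_sub_left, real_inner_smul_left, real_inner_self_eq_norm_sq, ha, hm]
      have hexp3 : ‖h' x - h' y‖ ^ 2 = n ^ 2 - 2 * σ * a + σ ^ 2 * m ^ 2 := by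
        rw [hexp1]
        rw [norm_sub_sq_real, real_inner_smul_right, norm_smul]
        rw [ha, hn, hm, real_inner_comm]
        rw [mul_pow, Real.norm_eq_abs, sq_abs]
        ring
      rw [hexp2, hexp3] at hcoco_h
      have hLσ : (0:ℝ) < L - σ := by linarith
      have key : (σ + L) * a ≥ n ^ 2 + σ * L * m ^ 2 := by
        have h2 := mul_le_mul_of_nonneg_left hcoco_h hLσ.le
        have e : (L - σ) * (1 / (L - σ) * (n ^ 2 - 2 * σ * a + σ ^ 2 * m ^ 2))
            = n ^ 2 - 2 * σ * a + σ ^ 2 * m ^ 2 := by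
          field_simp
        rw [e] at h2
        nlinarith [h2]
      have hσL' : (0:ℝ) < σ + L := by linarith
      rw [ge_iff_le, ← sub_nonneg]
      have : a - ((1 / (σ + L)) * n ^ 2 + (σ * L / (σ + L)) * m ^ 2)
          = ((σ + L) * a - (n ^ 2 + σ * L * m ^ 2)) / (σ + L) := by
        field_simp
      rw [this]
      apply div_nonneg _ hσL'.le
      linarith
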